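/- For any integer k ≥ 1, the space of vector polynomials R_k = P_{k-1}^3 ⊕ S_k, where S_k = {p ∈ (homogeneous polynomials of degree k)^3 : x·p(x) = 0 for all x ∈ ℝ³}, has dimension k(k+2)(k+3)/2. -/

import Mathlib

open MvPolynomial

section Counting

lemma finrank_restrictSupport (s : Set (Fin 3 →₀ ℕ)) :
    Module.finrank ℝ (restrictSupport ℝ s) = Nat.card s :=
  Module.finrank_eq_nat_card_basis (basisRestrictSupport ℝ s)

lemma card_deg_eq (n : ℕ) :
    Nat.card {d : Fin 3 →₀ ℕ | d.degree = n} = (n + 2).choose 2 := by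
  have e : ↥{d : Fin 3 →₀ ℕ | d.degree = n} ≃ Sym (Fin 3) n := by
    refine (Equiv.subtypeEquivRight ?_).trans (Sym.equivNatSum (Fin 3) n).symm
    intro d
    simp [Finsupp.degree_apply, Finsupp.sum]
  rw [Nat.card_congr e, Nat.card_eq_fintype_card, Sym.card_sym_eq_choose]
  simp only [Fintype.card_fin]
  rw [show 3 + n - 1 = n + 2 by omega]
  exact Nat.choose_symm_of_eq_add (by omega)

lemma sum_eq_degree (d : Fin 3 →₀ ℕ) : (d.sum fun _ e => e) = d.degree := rfl

lemma finite_setEq (n : ℕ) : ({d : Fin 3 →₀ ℕ | d.degree = n}).Finite := by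
  rw [← Set.finite_coe_iff]
  have e : ↥{d : Fin 3 →₀ ℕ | d.degree = n} ≃ Sym (Fin 3) n := by
    refine (Equiv.subtypeEquivRight ?_).trans (Sym.equivNatSum (Fin 3) n).symm
    intro d
    simp [Finsupp.degree_apply, Finsupp.sum]
  exact Finite.of_equiv _ e.symm

lemma finite_setLe (m : ℕ) : ({d : Fin 3 →₀ ℕ | (d.sum fun _ e => e) ≤ m}).Finite := by
  rw [← Set.finite_coe_iff]
  refine Finite.of_injective (fun d => fun i : Fin 3 => (⟨d.1 i, ?_⟩ : Fin (m+1))) ?_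
  · have : d.1 i ≤ d.1.sum fun _ e => e := by
      rcases eq_or_ne (d.1 i) 0 with h | h
      · simp [h]
      · exact Finset.single_le_sum (fun _ _ => Nat.zero_le _) (Finsupp.mem_support_iff.mpr h)
    have hd := d.2
    simp only [Set.mem_setOf_eq] at hd
    omega
  · intro a b hab
    ext1
    ext i
    exact congrArg Fin.val (congrFun hab i)

lemma card_setLe (m : ℕ) :
    Nat.card {d : Fin 3 →₀ ℕ | (d.sum fun _ e => e) ≤ m} = (m + 3).choose 3 := by
  induction m with
  | zero =>
    have h0 : {d : Fin 3 →₀ ℕ | (d.sum fun _ e => e) ≤ 0} = {d | d.degree = 0} := by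
      ext d; simp [sum_eq_degree, Nat.le_zero]
    rw [h0, card_deg_eq]
    decide
  | succ m ih =>
    have hset : {d : Fin 3 →₀ ℕ | (d.sum fun _ e => e) ≤ m + 1} =
        {d | (d.sum fun _ e => e) ≤ m} ∪ {d | d.degree = m + 1} := by
      ext d
      simp only [Set.mem_setOf_eq, Set.mem_union, sum_eq_degree]
      omega
    rw [hset, Nat.card_coe_set_eq, Set.ncard_union_eq ?_ (finite_setLe m) (finite_setEq (m+1)),
      ← Nat.card_coe_set_eq, ← Nat.card_coe_set_eq, ih, card_deg_eq]
    · have h1 : (m + 1 + 3).choose 3 = (m + 3).choose 2 + (m + 3).choose 3 := by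
        rw [show m + 1 + 3 = (m + 3) + 1 by ring, show (3 : ℕ) = 2 + 1 from rfl,
          Nat.choose_succ_succ]
      have h2 : m + 1 + 2 = m + 3 := by ring
      rw [h2, h1]
      omega
    · rw [Set.disjoint_left]
      intro d hd hd'
      simp only [Set.mem_setOf_eq, sum_eq_degree] at hd hd'
      omega

lemma two_mul_choose_two (n : ℕ) : 2 * (n + 2).choose 2 = (n + 1) * (n + 2) := by
  rw [Nat.choose_two_right, show n + 2 - 1 = n + 1 by omega]
  rw [Nat.mul_div_cancel']
  · ring
  · rw [mul_comm]
    exact (Nat.even_mul_succ_self (n + 1)).two_dvd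

lemma six_mul_choose_three (n : ℕ) : 6 * (n + 3).choose 3 = (n + 1) * (n + 2) * (n + 3) := by
  induction n with
  | zero => decide
  | succ n ih =>
    have h1 : (n + 1 + 3).choose 3 = (n + 3).choose 2 + (n + 3).choose 3 := by
      rw [show n + 1 + 3 = (n + 3) + 1 by ring, show (3 : ℕ) = 2 + 1 from rfl,
        Nat.choose_succ_succ]
    have h2 := two_mul_choose_two (n + 1)
    rw [show n + 1 + 2 = n + 3 by ring] at h2
    obtain ⟨P, hP⟩ : ∃ P, (n + 2) * (n + 3) = P := ⟨_, rfl⟩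
    obtain ⟨Q, hQ⟩ : ∃ Q, (n + 1) * (n + 2) * (n + 3) = Q := ⟨_, rfl⟩
    obtain ⟨T, hT⟩ : ∃ T, (n + 2) * (n + 3) * (n + 4) = T := ⟨_, rfl⟩
    have key : 3 * P + Q = T := by rw [← hP, ← hQ, ← hT]; ring
    rw [show n + 1 + 1 = n + 2 by ring, show n + 1 + 2 = n + 3 by ring,
      show n + 1 + 3 = n + 4 by ring, hT]
    rw [hQ] at ih
    rw [hP] at h2
    rw [show n + 1 + 3 = n + 4 by ring] at h1
    omega

lemma arith_final (A B C s p q r t : ℕ) (h6A : 6 * A = p) (h2B : 2 * B = q) (h2C : 2 * C = r)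
    (hS : C + s = 3 * B) (key : p + 3 * q = t + r) : 3 * A + s = t / 2 := by omega

end Counting

/-- The submodule `Submodule.pi Set.univ p` is equivalent to the product of the `p i`. -/
noncomputable def piSubEquiv {ι : Type*} [Fintype ι]
    {M : ι → Type*} [∀ i, AddCommMonoid (M i)] [∀ i, Module ℝ (M i)]
    (p : ∀ i, Submodule ℝ (M i)) :
    (Submodule.pi Set.univ p) ≃ₗ[ℝ] ((i : ι) → p i) where
  toFun x i := ⟨x.1 i, x.2 i trivial⟩
  invFun f := ⟨fun i => f i, fun i _ => (f i).2⟩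
  map_add' _ _ := rfl
  map_smul' _ _ := rfl
  left_inv _ := rfl
  right_inv _ := rfl

lemma homog_le_rtd (n : ℕ) :
    homogeneousSubmodule (Fin 3) ℝ n ≤ restrictTotalDegree (Fin 3) ℝ n := by
  intro p hp
  rw [mem_restrictTotalDegree]
  exact hp.totalDegree_le

instance homog_fd (n : ℕ) : FiniteDimensional ℝ (homogeneousSubmodule (Fin 3) ℝ n) :=
  Submodule.finiteDimensional_of_le (homog_le_rtd n)

lemma finrank_homog (n : ℕ) :
    Module.finrank ℝ (homogeneousSubmodule (Fin 3) ℝ n) = (n + 2).choose 2 := by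
  rw [homogeneousSubmodule_eq_finsupp_supported]
  exact (finrank_restrictSupport _).trans (card_deg_eq n)

lemma finrank_rtd (m : ℕ) :
    Module.finrank ℝ (restrictTotalDegree (Fin 3) ℝ m) = (m + 3).choose 3 :=
  (finrank_restrictSupport _).trans (card_setLe m)

set_option synthInstance.maxHeartbeats 1000000 in
lemma finrank_pi_submodule (W : Submodule ℝ (MvPolynomial (Fin 3) ℝ)) [FiniteDimensional ℝ W] :
    Module.finrank ℝ (Submodule.pi Set.univ fun _ : Fin 3 => W) = 3 * Module.finrank ℝ W := by
  haveI : ∀ _i : Fin 3, Module.Free ℝ W := fun _ => inferInstance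
  rw [(piSubEquiv fun _ : Fin 3 => W).finrank_eq, Module.finrank_pi_fintype]
  simp

instance pi_submodule_fd (W : Submodule ℝ (MvPolynomial (Fin 3) ℝ)) [FiniteDimensional ℝ W] :
    FiniteDimensional ℝ (Submodule.pi Set.univ fun _ : Fin 3 => W) :=
  Module.Finite.equiv (piSubEquiv fun _ : Fin 3 => W).symm

/-- The linear map `p ↦ x · p(x) = ∑ i, xᵢ * pᵢ` on vector polynomials. -/
noncomputable def dotX : (Fin 3 → MvPolynomial (Fin 3) ℝ) →ₗ[ℝ] MvPolynomial (Fin 3) ℝ where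
  toFun p := ∑ i, X i * p i
  map_add' p q := by simp [mul_add, Finset.sum_add_distrib]
  map_smul' c p := by simp [Finset.smul_sum, mul_smul_comm]

lemma dotX_apply (p : Fin 3 → MvPolynomial (Fin 3) ℝ) : dotX p = ∑ i, X i * p i := rfl

lemma dotX_single (i : Fin 3) (q : MvPolynomial (Fin 3) ℝ) :
    dotX (Pi.single i q) = X i * q := by
  rw [dotX_apply, Finset.sum_eq_single i]
  · rw [Pi.single_eq_same]
  · intro j _ hj
    rw [Pi.single_eq_of_ne hj, mul_zero]
  · intro h
    exact absurd (Finset.mem_univ i) h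

/-- `S_k`: vector polynomials, homogeneous of degree `k` in each component,
satisfying `x · p(x) = 0`. -/
noncomputable def Sspace (k : ℕ) : Submodule ℝ (Fin 3 → MvPolynomial (Fin 3) ℝ) :=
  (Submodule.pi Set.univ fun _ : Fin 3 => homogeneousSubmodule (Fin 3) ℝ k) ⊓
    LinearMap.ker dotX

/-- `R_k = (P_{k-1})³ ⊕ S_k`, the first-kind Nédélec space. -/
noncomputable def Rspace (k : ℕ) : Submodule ℝ (Fin 3 → MvPolynomial (Fin 3) ℝ) :=
  (Submodule.pi Set.univ fun _ : Fin 3 => restrictTotalDegree (Fin 3) ℝ (k - 1)) ⊔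
    Sspace k

lemma degree_add3 (a b : Fin 3 →₀ ℕ) : (a + b).degree = a.degree + b.degree := by
  simp only [Finsupp.degree_eq_weight_one]
  exact map_add _ a b

lemma degree_single3 (i : Fin 3) : (Finsupp.single i 1).degree = 1 := by
  rw [Finsupp.degree_apply, Finsupp.support_single_ne_zero i one_ne_zero]
  simp

lemma dotX_mem_homog {k : ℕ} {p : Fin 3 → MvPolynomial (Fin 3) ℝ}
    (hp : p ∈ Submodule.pi Set.univ fun _ : Fin 3 => homogeneousSubmodule (Fin 3) ℝ k) :
    dotX p ∈ homogeneousSubmodule (Fin 3) ℝ (k + 1) := by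
  rw [dotX_apply]
  refine Submodule.sum_mem _ fun i _ => ?_
  rw [mem_homogeneousSubmodule, show k + 1 = 1 + k by ring]
  exact (isHomogeneous_X ℝ i).mul (hp i trivial)

set_option maxHeartbeats 1000000 in
lemma dotX_surj (k : ℕ) :
    homogeneousSubmodule (Fin 3) ℝ (k + 1) ≤ Submodule.map dotX
      (Submodule.pi Set.univ fun _ : Fin 3 => homogeneousSubmodule (Fin 3) ℝ k) := by
  rw [homogeneousSubmodule_eq_finsupp_supported, AddMonoidAlgebra.supported_eq_span_single,
    Submodule.span_le]
  rintro _ ⟨d, hd, rfl⟩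
  simp only [Set.mem_setOf_eq] at hd
  obtain ⟨i, hi⟩ : ∃ i, d i ≠ 0 := by
    by_contra h
    push_neg at h
    have hd0 : d = 0 := Finsupp.ext h
    rw [hd0, map_zero] at hd
    omega
  have hle : Finsupp.single i 1 ≤ d := Finsupp.single_le_iff.mpr (by omega)
  have hsum : Finsupp.single i 1 + (d - Finsupp.single i 1) = d := add_tsub_cancel_of_le hle
  have hdeg : (d - Finsupp.single i 1).degree = k := by
    have := degree_add3 (Finsupp.single i 1) (d - Finsupp.single i 1)
    rw [hsum, hd, degree_single3] at this
    omega
  refine ⟨Pi.single i (monomial (d - Finsupp.single i 1) 1), fun j _ => ?_, ?_⟩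
  · rcases eq_or_ne j i with rfl | hj
    · rw [Pi.single_eq_same]
      exact isHomogeneous_monomial 1 hdeg
    · rw [Pi.single_eq_of_ne hj]
      exact (homogeneousSubmodule (Fin 3) ℝ k).zero_mem
  · rw [dotX_single]
    beta_reduce
    conv_rhs => rw [single_eq_monomial, ← hsum, monomial_single_add, pow_one]

set_option synthInstance.maxHeartbeats 1000000 in
set_option maxHeartbeats 1000000 in
theorem dim_Rspace (k : ℕ) (hk : 1 ≤ k) :
    Module.finrank ℝ (Rspace k) = k * (k + 2) * (k + 3) / 2 := by
  obtain ⟨n, rfl⟩ : ∃ n, k = n + 1 := ⟨k - 1, by omega⟩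
  clear hk
  have hSle : Sspace (n + 1) ≤
      Submodule.pi Set.univ fun _ : Fin 3 => homogeneousSubmodule (Fin 3) ℝ (n + 1) :=
    inf_le_left
  haveI : FiniteDimensional ℝ
      (Submodule.pi Set.univ fun _ : Fin 3 => homogeneousSubmodule (Fin 3) ℝ (n + 1)) :=
    pi_submodule_fd _
  haveI : FiniteDimensional ℝ (Sspace (n + 1)) := Submodule.finiteDimensional_of_le hSle
  haveI : FiniteDimensional ℝ
      (Submodule.pi Set.univ fun _ : Fin 3 => restrictTotalDegree (Fin 3) ℝ (n + 1 - 1)) :=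
    pi_submodule_fd _
  -- disjointness
  have hdis : (Submodule.pi Set.univ fun _ : Fin 3 => restrictTotalDegree (Fin 3) ℝ (n + 1 - 1))
      ⊓ Sspace (n + 1) = ⊥ := by
    rw [eq_bot_iff]
    rintro x ⟨hxP, hxH, -⟩
    rw [Submodule.mem_bot]
    funext i
    by_contra hne
    have h1 : (x i).totalDegree = n + 1 := (hxH i trivial).totalDegree hne
    have h2 : (x i).totalDegree ≤ n + 1 - 1 := (mem_restrictTotalDegree _ _ _).mp (hxP i trivial)
    omega
  -- rank-nullity for dotX restricted to homogeneous vector polys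
  let L : (Submodule.pi Set.univ fun _ : Fin 3 => homogeneousSubmodule (Fin 3) ℝ (n + 1))
      →ₗ[ℝ] (homogeneousSubmodule (Fin 3) ℝ (n + 2)) :=
    LinearMap.codRestrict _
      (dotX.domRestrict
        (Submodule.pi Set.univ fun _ : Fin 3 => homogeneousSubmodule (Fin 3) ℝ (n + 1)))
      (fun x => dotX_mem_homog x.2)
  have hLsurj : Function.Surjective L := by
    rintro ⟨q, hq⟩
    obtain ⟨p, hp, hdp⟩ := dotX_surj (n + 1) hq
    exact ⟨⟨p, hp⟩, Subtype.ext hdp⟩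
  have hrn := LinearMap.finrank_range_add_finrank_ker L
  rw [LinearMap.range_eq_top.mpr hLsurj, finrank_top] at hrn
  have hker : Module.finrank ℝ (LinearMap.ker L) = Module.finrank ℝ (Sspace (n + 1)) := by
    have h1 : LinearMap.ker L = Submodule.comap
        (Submodule.pi Set.univ fun _ : Fin 3 =>
          homogeneousSubmodule (Fin 3) ℝ (n + 1)).subtype (Sspace (n + 1)) := by
      show LinearMap.ker (LinearMap.codRestrict _ _ _) = _
      refine (LinearMap.ker_codRestrict _ _ _).trans ?_; rw [LinearMap.ker_domRestrict]
      show _ = Submodule.comap _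
        ((Submodule.pi Set.univ fun _ : Fin 3 => homogeneousSubmodule (Fin 3) ℝ (n + 1))
          ⊓ LinearMap.ker dotX)
      rw [Submodule.comap_inf, Submodule.comap_subtype_self, top_inf_eq]
    rw [h1]
    exact (Submodule.comapSubtypeEquivOfLe hSle).finrank_eq
  rw [hker] at hrn
  -- dimension counts
  have hHpi : Module.finrank ℝ
      (Submodule.pi Set.univ fun _ : Fin 3 => homogeneousSubmodule (Fin 3) ℝ (n + 1))
      = 3 * (n + 3).choose 2 := by
    rw [finrank_pi_submodule, finrank_homog, show n + 1 + 2 = n + 3 by ring]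
  have hH2 : Module.finrank ℝ (homogeneousSubmodule (Fin 3) ℝ (n + 2))
      = (n + 4).choose 2 := by
    rw [finrank_homog, show n + 2 + 2 = n + 4 by ring]
  have hPpi : Module.finrank ℝ
      (Submodule.pi Set.univ fun _ : Fin 3 => restrictTotalDegree (Fin 3) ℝ (n + 1 - 1))
      = 3 * (n + 3).choose 3 := by
    rw [finrank_pi_submodule, show n + 1 - 1 = n by omega, finrank_rtd]
  rw [hHpi, hH2] at hrn
  -- sup formula
  have hsup := Submodule.finrank_sup_add_finrank_inf_eq
    (Submodule.pi Set.univ fun _ : Fin 3 => restrictTotalDegree (Fin 3) ℝ (n + 1 - 1))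
    (Sspace (n + 1))
  rw [hdis, finrank_bot, add_zero, hPpi] at hsup
  have hR : Module.finrank ℝ (Rspace (n + 1))
      = 3 * (n + 3).choose 3 + Module.finrank ℝ (Sspace (n + 1)) := by
    rw [Rspace]
    exact hsup
  rw [hR, show n + 1 + 2 = n + 3 by ring, show n + 1 + 3 = n + 4 by ring]
  have h2B := two_mul_choose_two (n + 1)
  rw [show n + 1 + 2 = n + 3 by ring, show n + 1 + 1 = n + 2 by ring] at h2B
  have h2C := two_mul_choose_two (n + 2)
  rw [show n + 2 + 2 = n + 4 by ring, show n + 2 + 1 = n + 3 by ring] at h2C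
  exact arith_final _ _ _ _ _ _ _ _ (six_mul_choose_three n) h2B h2C hrn
    (by ring)
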